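/- Let s be a binary string of length l, s^{(1)} its expansion, and let x_1 < ... < x_k be a monochromatic D-diffsequence in {1,...,4l} of color c ∈ {0,1} under s^{(1)} such that s_{pos(x_i)} = d for all 1 ≤ i ≤ k, for some fixed d ∈ {0,1}. Then there is at most one index j ∈ {1,...,k-1} with pos(x_j) = pos(x_{j+1}). -/
import Mathlib


/-- The set of powers of two. -/
def D : Set ℕ := {d | ∃ i : ℕ, d = 2 ^ i}

/-- `pos i = ⌈i / 4⌉`. -/
def pos (i : ℕ) : ℕ := (i + 3) / 4

/-- The expansion of a binary string: each `0` becomes `0011`, each `1` becomes `1100`.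
For `1 ≤ m`, `s⁽¹⁾_m = s_{⌈m/4⌉}` if `m % 4 ∈ {1,2}` and `1 - s_{⌈m/4⌉}` otherwise. -/
def expand (s : ℕ → Fin 2) : ℕ → Fin 2 :=
  fun m => if m % 4 = 1 ∨ m % 4 = 2 then s (pos m) else 1 - s (pos m)

/-- `a 0 < a 1 < ⋯ < a (k-1)` is a `D`-diffsequence contained in `{1, …, n}`. -/
def IsDiffseqIn (n k : ℕ) (a : ℕ → ℕ) : Prop :=
  (∀ i < k, 1 ≤ a i ∧ a i ≤ n) ∧
    ∀ i, i + 1 < k → a i < a (i + 1) ∧ a (i + 1) - a i ∈ D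

/-- The set of hops of a length-`k` diffsequence `a` with respect to the string `s`:
indices `j` (0-based) with `a (j+1) - a j = 1` and `s (a (j+1)) ≠ s (a j)`. -/
def hops (s : ℕ → Fin 2) (k : ℕ) (a : ℕ → ℕ) : Finset ℕ :=
  (Finset.range (k - 1)).filter fun j => a (j + 1) = a j + 1 ∧ s (a (j + 1)) ≠ s (a j)

/-- `psi s n h` : the maximum length of a `D`-diffsequence contained in `{1, …, n}`
with at most `h` hops with respect to `s` (0 if there is none). -/
noncomputable def psi (s : ℕ → Fin 2) (n h : ℕ) : ℕ :=
  sSup {k | ∃ a : ℕ → ℕ, IsDiffseqIn n k a ∧ (hops s k a).card ≤ h}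

lemma D_cases {t : ℕ} (ht : t ∈ D) : t = 1 ∨ t = 2 ∨ t % 4 = 0 := by
  obtain ⟨m, rfl⟩ := ht
  match m with
  | 0 => left; rfl
  | 1 => right; left; rfl
  | Nat.succ (Nat.succ m) =>
    right; right
    have : 2 ^ (m + 2) = 2 ^ m * 4 := by ring
    omega

theorem stmt_12 (l k : ℕ) (s : ℕ → Fin 2) (x : ℕ → ℕ) (c d : Fin 2)
    (hdiff : IsDiffseqIn (4 * l) k x)
    (hmono : ∀ i < k, expand s (x i) = c)
    (hd : ∀ i < k, s (pos (x i)) = d) :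
    ∀ j₁ j₂, j₁ + 1 < k → j₂ + 1 < k →
      pos (x j₁) = pos (x (j₁ + 1)) → pos (x j₂) = pos (x (j₂ + 1)) → j₁ = j₂ := by
  have hne : ∀ e : Fin 2, 1 - e ≠ e := by decide
  -- residue classification
  have hr : ∃ r : ℕ, (r = 1 ∨ r = 3) ∧
      ∀ i < k, x i % 4 = r ∨ x i % 4 = (r + 1) % 4 := by
    by_cases hcd : c = d
    · refine ⟨1, Or.inl rfl, fun i hi => ?_⟩
      have hm := hmono i hi
      rw [expand] at hm
      by_cases h4 : x i % 4 = 1 ∨ x i % 4 = 2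
      · simpa using h4
      · rw [if_neg h4, hd i hi] at hm
        exact absurd (hm.trans hcd) (hne d)
    · refine ⟨3, Or.inr rfl, fun i hi => ?_⟩
      have hm := hmono i hi
      rw [expand] at hm
      by_cases h4 : x i % 4 = 1 ∨ x i % 4 = 2
      · rw [if_pos h4, hd i hi] at hm
        exact (hcd hm.symm).elim
      · omega
  obtain ⟨r, hr13, hres⟩ := hr
  -- step difference classification
  have hstep : ∀ j, j + 1 < k → x j < x (j + 1) ∧
      (x (j + 1) - x j = 1 ∨ x (j + 1) - x j = 2 ∨ (x (j + 1) - x j) % 4 = 0) := by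
    intro j hj
    obtain ⟨hlt, hD⟩ := hdiff.2 j hj
    exact ⟨hlt, D_cases hD⟩
  -- pos equality forces odd -> even
  have key1 : ∀ j, j + 1 < k → pos (x j) = pos (x (j + 1)) →
      x j % 2 = 1 ∧ x (j + 1) % 2 = 0 := by
    intro j hj hp
    have h1 := hres j (by omega)
    have h2 := hres (j + 1) hj
    have h3 := hstep j hj
    rw [pos, pos] at hp
    omega
  -- even stays even
  have key2 : ∀ j, j + 1 < k → x j % 2 = 0 → x (j + 1) % 2 = 0 := by
    intro j hj he
    have h1 := hres j (by omega)
    have h2 := hres (j + 1) hj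
    have h3 := hstep j hj
    omega
  -- even propagates
  have prop : ∀ n j, j + 1 + n < k → x (j + 1) % 2 = 0 → x (j + 1 + n) % 2 = 0 := by
    intro n
    induction n with
    | zero => intro j hj he; simpa using he
    | succ m ih =>
      intro j hj he
      have h := key2 (j + 1 + m) (by omega) (ih j (by omega) he)
      have heq : j + 1 + (m + 1) = (j + 1 + m) + 1 := by omega
      rw [heq]; exact h
  have main : ∀ j₁ j₂, j₁ < j₂ → j₁ + 1 < k → j₂ + 1 < k →
      pos (x j₁) = pos (x (j₁ + 1)) → pos (x j₂) = pos (x (j₂ + 1)) → False := by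
    intro j₁ j₂ hlt h₁ h₂ hp₁ hp₂
    have he := (key1 j₁ h₁ hp₁).2
    have ho := (key1 j₂ h₂ hp₂).1
    have := prop (j₂ - j₁ - 1) j₁ (by omega) he
    have heq : j₁ + 1 + (j₂ - j₁ - 1) = j₂ := by omega
    rw [heq] at this
    omega
  intro j₁ j₂ h₁ h₂ hp₁ hp₂
  rcases lt_trichotomy j₁ j₂ with h | h | h
  · exact absurd (main j₁ j₂ h h₁ h₂ hp₁ hp₂) not_false
  · exact h
  · exact absurd (main j₂ j₁ h h₂ h₁ hp₂ hp₁) not_false
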